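/- arXiv:2110.08587 — 5 statements merged into one kernel-verified Lean document; each statement's English description precedes it below -/
import Mathlib

section
/- For every integer b and every choice of signs ε₀, ε₂ ∈ {1, -1}, the quadratic polynomial ε₂x^2 - 8b·x + 10ε₀ is irreducible over ℚ. -/
open Polynomial

lemma no_root_aux (b ε₀ ε₂ : ℤ) (h₀ : ε₀ = 1 ∨ ε₀ = -1) (h₂ : ε₂ = 1 ∨ ε₂ = -1) (r : ℚ) :
    (ε₂ : ℚ) * r ^ 2 - (8 * b : ℤ) * r + (10 * ε₀ : ℤ) ≠ 0 := by
  intro hr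
  have hq : (r.den : ℚ) ≠ 0 := by exact_mod_cast r.den_ne_zero
  have hnum : (r.num : ℚ) = r * r.den := by
    have h := Rat.num_div_den r
    rw [div_eq_iff hq] at h
    exact h
  have key : ε₂ * r.num ^ 2 - 8 * b * r.num * (r.den : ℤ) + 10 * ε₀ * (r.den : ℤ) ^ 2 = 0 := by
    have : ((ε₂ * r.num ^ 2 - 8 * b * r.num * (r.den : ℤ) + 10 * ε₀ * (r.den : ℤ) ^ 2 : ℤ) : ℚ)
        = ((ε₂ : ℚ) * r ^ 2 - (8 * b : ℤ) * r + (10 * ε₀ : ℤ)) * (r.den : ℚ) ^ 2 := by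
      push_cast [hnum]; ring
    rw [hr, zero_mul] at this
    exact_mod_cast this
  -- p even
  have hpsq : Even (r.num ^ 2) := by
    have h1 : Even (ε₂ * r.num ^ 2) :=
      ⟨4 * b * r.num * r.den - 5 * ε₀ * r.den ^ 2, by linarith⟩
    rcases h₂ with rfl | rfl
    · simpa using h1
    · rcases h1 with ⟨k, hk⟩; exact ⟨-k, by linarith⟩
  have hp : Even r.num := (Int.even_pow' (by norm_num)).mp hpsq
  obtain ⟨k, hk⟩ := hp
  have key2 : 2 * ε₂ * k ^ 2 - 8 * b * k * (r.den : ℤ) + 5 * ε₀ * (r.den : ℤ) ^ 2 = 0 := by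
    rw [hk] at key; linarith [key]
  have hqsq : Even (ε₀ * (5 * (r.den : ℤ) ^ 2)) :=
    ⟨4 * b * k * r.den - ε₂ * k ^ 2, by linarith⟩
  have hq2 : Even ((r.den : ℤ) ^ 2) := by
    have h1 : Even (5 * (r.den : ℤ) ^ 2) := by
      rcases h₀ with rfl | rfl
      · simpa using hqsq
      · rcases hqsq with ⟨m, hm⟩; exact ⟨-m, by linarith⟩
    rcases h1 with ⟨m, hm⟩
    rcases Int.even_or_odd ((r.den : ℤ) ^ 2) with h | h
    · exact h
    · rcases h with ⟨n, hn⟩; omega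
  have hqE : Even (r.den : ℤ) := (Int.even_pow' (by norm_num)).mp hq2
  have hcop := r.reduced
  have h2p : 2 ∣ r.num.natAbs := by omega
  obtain ⟨m, hm⟩ := hqE
  have h2q : 2 ∣ r.den := by omega
  have hg : 2 ∣ Nat.gcd r.num.natAbs r.den := Nat.dvd_gcd h2p h2q
  have h1 : Nat.gcd r.num.natAbs r.den = 1 := hcop
  omega

theorem stmt_2 (b ε₀ ε₂ : ℤ) (h₀ : ε₀ = 1 ∨ ε₀ = -1) (h₂ : ε₂ = 1 ∨ ε₂ = -1) :
    Irreducible (C (ε₂ : ℚ) * X ^ 2 - C ((8 * b : ℤ) : ℚ) * X + C ((10 * ε₀ : ℤ) : ℚ) : ℚ[X]) := by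
  have hε₂ : (ε₂ : ℚ) ≠ 0 := by rcases h₂ with rfl | rfl <;> norm_num
  have hdeg : (C (ε₂ : ℚ) * X ^ 2 - C ((8 * b : ℤ) : ℚ) * X + C ((10 * ε₀ : ℤ) : ℚ) : ℚ[X]).natDegree = 2 := by
    compute_degree!
    exact_mod_cast hε₂
  rw [irreducible_iff_roots_eq_zero_of_degree_le_three (by omega) (by omega)]
  rw [Multiset.eq_zero_iff_forall_notMem]
  intro r hmem
  rw [mem_roots'] at hmem
  have := hmem.2
  rw [IsRoot, eval_add, eval_sub, eval_mul, eval_mul, eval_C, eval_C, eval_C, eval_pow, eval_X] at this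
  exact no_root_aux b ε₀ ε₂ h₀ h₂ r this
end

section
/- For every integer b and signs ε₀, ε₂ ∈ {1, -1}, the polynomial ε₂x^2 - 32b·x + 136ε₀ is irreducible over ℚ. -/
open Polynomial

lemma key_int (b d n : ℤ) (hd : d = 1 ∨ d = -1) :
    n ^ 2 - 32 * b * n + 136 * d ≠ 0 := by
  intro h
  have h2 : (2 : ℤ) ∣ n ^ 2 := ⟨16 * b * n - 68 * d, by linarith⟩
  obtain ⟨m, rfl⟩ := Int.Prime.dvd_pow' Nat.prime_two h2
  have h2m : (2 : ℤ) ∣ m ^ 2 := ⟨8 * b * m - 17 * d, by ring_nf; ring_nf at h; linarith⟩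
  obtain ⟨k, rfl⟩ := Int.Prime.dvd_pow' Nat.prime_two h2m
  have h' : 16 * k ^ 2 - 128 * (b * k) + 136 * d = 0 := by ring_nf; ring_nf at h; linarith
  have hk : (0:ℤ) ≤ k ^ 2 := sq_nonneg k
  rcases hd with rfl | rfl <;> omega

theorem stmt_3 (b ε₀ ε₂ : ℤ) (h₀ : ε₀ = 1 ∨ ε₀ = -1) (h₂ : ε₂ = 1 ∨ ε₂ = -1) :
    Irreducible (C (ε₂ : ℚ) * X ^ 2 - C ((32 * b : ℤ) : ℚ) * X + C ((136 * ε₀ : ℤ) : ℚ) : ℚ[X]) := by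
  have hε₂ : (ε₂ : ℚ) ≠ 0 := by rcases h₂ with rfl | rfl <;> norm_num
  have hdeg : (C (ε₂ : ℚ) * X ^ 2 - C ((32 * b : ℤ) : ℚ) * X + C ((136 * ε₀ : ℤ) : ℚ) : ℚ[X]).natDegree = 2 := by
    compute_degree!
    rcases h₂ with rfl | rfl <;> norm_num
  rw [irreducible_iff_roots_eq_zero_of_degree_le_three (by omega) (by omega)]
  rw [Multiset.eq_zero_iff_forall_notMem]
  intro x hx
  have hp0 : (C (ε₂ : ℚ) * X ^ 2 - C ((32 * b : ℤ) : ℚ) * X + C ((136 * ε₀ : ℤ) : ℚ) : ℚ[X]) ≠ 0 := by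
    intro h; rw [h] at hdeg; simp at hdeg
  rw [mem_roots hp0] at hx
  have hroot : (ε₂ : ℚ) * x ^ 2 - 32 * b * x + 136 * ε₀ = 0 := by
    have := hx; simp [IsRoot, eval_add, eval_sub, eval_mul, eval_pow] at this
    linarith
  -- multiply by ε₂
  have hmul : x ^ 2 - 32 * (b * ε₂ : ℤ) * x + 136 * (ε₀ * ε₂ : ℤ) = 0 := by
    rcases h₂ with rfl | rfl <;> push_cast <;> push_cast at hroot <;> linarith
  -- x is an algebraic integer
  have hint : IsIntegral ℤ x := by
    refine ⟨X ^ 2 - C (32 * (b * ε₂)) * X + C (136 * (ε₀ * ε₂)), ?_, ?_⟩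
    · monicity!
    · rw [← aeval_def]
      rw [map_add, map_sub, _root_.map_mul, map_pow, aeval_X, aeval_C, aeval_C]
      simp only [algebraMap_int_eq, eq_intCast]
      push_cast
      push_cast at hmul
      linarith
  obtain ⟨n, rfl⟩ := IsIntegrallyClosed.isIntegral_iff.mp hint
  have hn : n ^ 2 - 32 * (b * ε₂) * n + 136 * (ε₀ * ε₂) = 0 := by
    simp only [algebraMap_int_eq, eq_intCast] at hmul
    exact_mod_cast hmul
  have hd : ε₀ * ε₂ = 1 ∨ ε₀ * ε₂ = -1 := by rcases h₀ with rfl | rfl <;> rcases h₂ with rfl | rfl <;> norm_num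
  exact key_int (b * ε₂) (ε₀ * ε₂) n hd hn
end

section
/- The polynomial g₁(x, 4, 7) = x^4 + 44x^3 + 594x^2 + 2970x + 4290 is irreducible over ℚ. -/
open Polynomial

private noncomputable def fZ : ℤ[X] :=
  X ^ 4 + C (44 : ℤ) * X ^ 3 + C 594 * X ^ 2 + C 2970 * X + C 4290

private lemma fZ_monic : fZ.Monic := by
  unfold fZ
  monicity!

private lemma fZ_natDegree : fZ.natDegree = 4 := natDegree_eq_of_degree_eq_some (by
  unfold fZ; compute_degree!)

private lemma fZ_irr : Irreducible fZ := by
  have hE : fZ.IsEisensteinAt (Ideal.span {(11 : ℤ)}) := by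
    constructor
    · rw [fZ_monic.leadingCoeff, Ideal.mem_span_singleton]
      decide
    · intro n hn
      rw [fZ_natDegree] at hn
      rw [Ideal.mem_span_singleton]
      interval_cases n <;> (unfold fZ; norm_num [coeff_one, coeff_X])
    · rw [Ideal.span_singleton_pow, Ideal.mem_span_singleton]
      unfold fZ
      norm_num [coeff_one, coeff_X]
  exact hE.irreducible ((Ideal.span_singleton_prime (by norm_num : (11:ℤ) ≠ 0)).2 (by norm_num))
    fZ_monic.isPrimitive (by rw [fZ_natDegree]; norm_num)

theorem stmt_9 :
    Irreducible (X ^ 4 + C (44 : ℚ) * X ^ 3 + C 594 * X ^ 2 + C 2970 * X + C 4290 : ℚ[X]) := by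
  have h := (fZ_monic.isPrimitive.irreducible_iff_irreducible_map_fraction_map
    (K := ℚ)).mp fZ_irr
  have : (fZ.map (algebraMap ℤ ℚ)) =
      (X ^ 4 + C (44 : ℚ) * X ^ 3 + C 594 * X ^ 2 + C 2970 * X + C 4290 : ℚ[X]) := by
    unfold fZ
    push_cast [Polynomial.map_add, Polynomial.map_mul, Polynomial.map_pow, Polynomial.map_X,
      Polynomial.map_C]
    norm_num
  rwa [this] at h
end

section
/- The polynomial g₁(x, 10, 4) = Σ_{j=0}^{10} (10!/j!)·C(14−j, 10−j)·x^j has no irreducible factor of degree 5 over ℚ. -/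
open Polynomial Finset

set_option exponentiation.threshold 10000
set_option maxHeartbeats 1000000

namespace Stmt14Aux

abbrev F : Type := ZMod 9967

instance : Fact (Nat.Prime 9967) := ⟨by norm_num⟩

/-- The integer polynomial G. -/
noncomputable def G : ℤ[X] :=
  X^10 + 50*X^9 + 1350*X^8 + 25200*X^7 + 352800*X^6 + 3810240*X^5 + 31752000*X^4 +
    199584000*X^3 + 898128000*X^2 + 2594592000*X + 3632428800

noncomputable def Q1 : F[X] := X^2 + C (4319 : F) * X + C (-2576 : F)
noncomputable def Q2 : F[X] := X^2 + C (4297 : F) * X + C (-3840 : F)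
noncomputable def Q3 : F[X] := X^2 + C (4790 : F) * X + C (74 : F)
noncomputable def Q4 : F[X] := X^2 + C (-3407 : F) * X + C (-1759 : F)
noncomputable def Q5 : F[X] := X^2 + C (18 : F) * X + C (-3093 : F)

lemma nonsquare_of_pow {d : F} (hd : d ^ 4983 = -1) (y : F) : y ^ 2 ≠ d := by
  intro hy
  have hy0 : y ≠ 0 := by
    rintro rfl
    rw [← hy, ← pow_mul, zero_pow (by norm_num)] at hd
    exact (by decide : (0 : F) ≠ -1) hd
  have h1 : d ^ 4983 = 1 := by
    rw [← hy, ← pow_mul]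
    have : y ^ (2 * 4983) = y ^ 9966 := by norm_num
    rw [this, ← ZMod.pow_card_sub_one_eq_one hy0]
  rw [h1] at hd
  exact (by decide : (1 : F) ≠ -1) hd

/-- A monic quadratic with non-square discriminant is irreducible. -/
lemma quad_irred (b c : F) (h : ∀ y : F, y ^ 2 ≠ b ^ 2 - 4 * c) :
    Irreducible (X^2 + C b * X + C c) := by
  set p : F[X] := X^2 + C b * X + C c with hp
  have hm : p.Monic := by unfold p; monicity!
  have hd : p.natDegree = 2 := by unfold p; compute_degree!
  by_contra hni
  obtain ⟨c₁, c₂, h0, h1⟩ := (hm.not_irreducible_iff_exists_add_mul_eq_coeff hd).mp hni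
  have hc0 : p.coeff 0 = c := by
    simp [hp, coeff_add, coeff_X_pow, coeff_C_mul, coeff_C, coeff_X]
  have hc1 : p.coeff 1 = b := by
    simp [hp, coeff_add, coeff_X_pow, coeff_C_mul, coeff_C, coeff_X]
  rw [hc0] at h0; rw [hc1] at h1
  exact h (c₁ - c₂) (by rw [h0, h1]; ring)

lemma pow_cert (d : ℕ) (hd : (d ^ 4983 % 9967 : ℕ) = 9966) : ((d : F)) ^ 4983 = -1 := by
  have h2 : ((d : ℕ) : F) ^ 4983 = ((d ^ 4983 % 9967 : ℕ) : F) := by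
    rw [ZMod.natCast_mod, Nat.cast_pow]
  rw [h2, hd]; decide

lemma hQ1 : Irreducible Q1 := quad_irred _ _ (by
  have := nonsquare_of_pow (pow_cert 5841 (by norm_num))
  intro y hy; exact this y (by rw [hy]; decide))
lemma hQ2 : Irreducible Q2 := quad_irred _ _ (by
  have := nonsquare_of_pow (pow_cert 751 (by norm_num))
  intro y hy; exact this y (by rw [hy]; decide))
lemma hQ3 : Irreducible Q3 := quad_irred _ _ (by
  have := nonsquare_of_pow (pow_cert 9737 (by norm_num))
  intro y hy; exact this y (by rw [hy]; decide))
lemma hQ4 : Irreducible Q4 := quad_irred _ _ (by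
  have := nonsquare_of_pow (pow_cert 3130 (by norm_num))
  intro y hy; exact this y (by rw [hy]; decide))
lemma hQ5 : Irreducible Q5 := quad_irred _ _ (by
  have := nonsquare_of_pow (pow_cert 2729 (by norm_num))
  intro y hy; exact this y (by rw [hy]; decide))

lemma monicQ (b c : F) : (X^2 + C b * X + C c).Monic := by monicity!
lemma degQ (b c : F) : (X^2 + C b * X + C c).natDegree = 2 := by compute_degree!

lemma Qne {b₁ c₁ b₂ c₂ : F} (h : b₁ ≠ b₂) :
    X^2 + C b₁ * X + C c₁ ≠ X^2 + C b₂ * X + C c₂ := by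
  intro he
  apply h
  have := congrArg (fun f : F[X] => f.coeff 1) he
  simpa [coeff_add, coeff_X_pow, coeff_C_mul, coeff_C, coeff_X] using this

/-- Three pairwise distinct monic irreducible quadratics cannot all divide
a monic polynomial of natDegree 5. -/
lemma no3 {A B C' s : F[X]} (hA : Irreducible A) (hB : Irreducible B) (hC : Irreducible C')
    (hAm : A.Monic) (hBm : B.Monic) (hCm : C'.Monic)
    (hA2 : A.natDegree = 2) (hB2 : B.natDegree = 2) (hC2 : C'.natDegree = 2)
    (hAB : A ≠ B) (hAC : A ≠ C') (hBC : B ≠ C')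
    (hs : s.Monic) (hsd : s.natDegree = 5)
    (h1 : A ∣ s) (h2 : B ∣ s) (h3 : C' ∣ s) : False := by
  have cop : ∀ {P Q : F[X]}, Irreducible P → Irreducible Q → P.Monic → Q.Monic → P ≠ Q →
      IsCoprime P Q := by
    intro P Q hP hQ hPm hQm hne
    rw [hP.coprime_iff_not_dvd]
    intro hdvd
    exact hne (eq_of_monic_of_associated hPm hQm (hP.associated_of_dvd hQ hdvd))
  have cAB := cop hA hB hAm hBm hAB
  have cAC := cop hA hC hAm hCm hAC
  have cBC := cop hB hC hBm hCm hBC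
  have h12 : A * B ∣ s := cAB.mul_dvd h1 h2
  have h123 : A * B * C' ∣ s := (IsCoprime.mul_left cAC cBC).mul_dvd h12 h3
  have hle : (A * B * C').natDegree ≤ s.natDegree :=
    natDegree_le_of_dvd h123 hs.ne_zero
  rw [natDegree_mul (mul_ne_zero hAm.ne_zero hBm.ne_zero) hCm.ne_zero,
    natDegree_mul hAm.ne_zero hBm.ne_zero, hA2, hB2, hC2, hsd] at hle
  omega

lemma Gmonic : G.Monic := by unfold G; monicity!

lemma Gdeg : G.natDegree = 10 := by unfold G; compute_degree!

lemma Gfact : G.map (Int.castRingHom F) = Q1 * Q2 * Q3 * Q4 * Q5 := by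
  have hz : (G : ℤ[X]) =
      (X^2 + 4319*X - 2576) * (X^2 + 4297*X - 3840) * (X^2 + 4790*X + 74) *
        (X^2 - 3407*X - 1759) * (X^2 + 18*X - 3093)
      + 9967 * (-399567087360 - 25518441077472*X + 23768171301858*X^2 + 89978947656620*X^3
          - 94532144340159*X^4 + 482221542885*X^5 + 30603322451*X^6 + 11515838*X^7
          - 1437*X^8 - X^9) := by
    unfold G; ring
  have h0 : (9967 : F[X]) = 0 := by
    have : (9967 : F[X]) = ((9967 : ℕ) : F[X]) := by norm_num
    rw [this, ← C_eq_natCast, show ((9967 : ℕ) : F) = 0 from ZMod.natCast_self _, map_zero]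
  rw [hz]
  simp only [Polynomial.map_add, Polynomial.map_mul, Polynomial.map_sub, Polynomial.map_pow,
    Polynomial.map_neg, Polynomial.map_ofNat, Polynomial.map_X, Polynomial.map_one]
  rw [h0, zero_mul, add_zero]
  unfold Q1 Q2 Q3 Q4 Q5
  simp only [map_neg, map_ofNat]
  ring

end Stmt14Aux

open Stmt14Aux

theorem stmt_14 (q : ℚ[X]) (hq : Irreducible q)
    (hdvd : q ∣ (∑ j ∈ Finset.range (10 + 1),
      C (((Nat.factorial 10 / Nat.factorial j) * Nat.choose (10 + 4 - j) (10 - j) : ℕ) : ℚ) * X ^ j : ℚ[X])) :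
    q.natDegree ≠ 5 := by
  intro hdeg5
  have hPG : (∑ j ∈ Finset.range (10 + 1),
      C (((Nat.factorial 10 / Nat.factorial j) * Nat.choose (10 + 4 - j) (10 - j) : ℕ) : ℚ) * X ^ j : ℚ[X])
      = G.map (algebraMap ℤ ℚ) := by
    unfold G
    simp only [Finset.sum_range_succ]
    norm_num [Nat.factorial, Nat.choose]
    simp only [map_ofNat]
    ring
  rw [hPG] at hdvd
  have hq0 : q ≠ 0 := hq.ne_zero
  have hl : q.leadingCoeff ≠ 0 := leadingCoeff_ne_zero.mpr hq0
  -- normalize q to be monic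
  set q1 : ℚ[X] := q * C q.leadingCoeff⁻¹ with hq1def
  have hq1m : q1.Monic := monic_mul_leadingCoeff_inv hq0
  have hq1q : q1 ∣ q := ⟨C q.leadingCoeff, by
    rw [hq1def, mul_assoc, ← C_mul, inv_mul_cancel₀ hl, C_1, mul_one]⟩
  have hq1dvd : q1 ∣ G.map (algebraMap ℤ ℚ) := hq1q.trans hdvd
  have hq1deg : q1.natDegree = 5 := by
    rw [hq1def, natDegree_mul_C (inv_ne_zero hl), hdeg5]
  -- lift to ℤ[X]
  obtain ⟨q', hq'⟩ := IsIntegrallyClosed.eq_map_mul_C_of_dvd (K := ℚ) Gmonic hq1dvd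
  rw [hq1m.leadingCoeff, map_one, mul_one] at hq'
  have hq'm : q'.Monic := by
    apply monic_of_injective (f := algebraMap ℤ ℚ) (fun a b h => by exact_mod_cast h)
    rw [hq']; exact hq1m
  have hq'deg : q'.natDegree = 5 := by
    rw [← hq1deg, ← hq', hq'm.natDegree_map]
  have hq'dvdG : q' ∣ G := by
    rw [← map_dvd_map (algebraMap ℤ ℚ) (fun a b h => by exact_mod_cast h) hq'm, hq']
    exact hq1dvd
  obtain ⟨r', hGqr⟩ := hq'dvdG
  have hr'm : r'.Monic := hq'm.of_mul_monic_left (hGqr ▸ Gmonic)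
  have hr'deg : r'.natDegree = 5 := by
    have h := natDegree_mul hq'm.ne_zero hr'm.ne_zero
    rw [← hGqr, Gdeg, hq'deg] at h
    omega
  -- reduce mod 9967
  set φ := Int.castRingHom F with hφ
  have hfac : (q'.map φ) * (r'.map φ) = Q1 * Q2 * Q3 * Q4 * Q5 := by
    rw [← Polynomial.map_mul, ← hGqr, Gfact]
  set A : F[X] := q'.map φ with hA
  set B : F[X] := r'.map φ with hB
  have hAm : A.Monic := hq'm.map φ
  have hBm : B.Monic := hr'm.map φ
  have hAdeg : A.natDegree = 5 := by rw [hA, hq'm.natDegree_map, hq'deg]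
  have hBdeg : B.natDegree = 5 := by rw [hB, hr'm.natDegree_map, hr'deg]
  -- each Qi is prime and divides A * B
  have prime_of : ∀ {Q : F[X]}, Irreducible Q → Prime Q := fun h =>
    (_root_.irreducible_iff_prime).mp h
  have hd1 : Q1 ∣ A ∨ Q1 ∣ B := (prime_of hQ1).2.2 A B (by rw [hfac]; ring_nf; exact ⟨Q2*Q3*Q4*Q5, by ring⟩)
  have hd2 : Q2 ∣ A ∨ Q2 ∣ B := (prime_of hQ2).2.2 A B (by rw [hfac]; exact ⟨Q1*Q3*Q4*Q5, by ring⟩)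
  have hd3 : Q3 ∣ A ∨ Q3 ∣ B := (prime_of hQ3).2.2 A B (by rw [hfac]; exact ⟨Q1*Q2*Q4*Q5, by ring⟩)
  have hd4 : Q4 ∣ A ∨ Q4 ∣ B := (prime_of hQ4).2.2 A B (by rw [hfac]; exact ⟨Q1*Q2*Q3*Q5, by ring⟩)
  have hd5 : Q5 ∣ A ∨ Q5 ∣ B := (prime_of hQ5).2.2 A B (by rw [hfac]; exact ⟨Q1*Q2*Q3*Q4, by ring⟩)
  have m1 : Q1.Monic := monicQ _ _
  have m2 : Q2.Monic := monicQ _ _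
  have m3 : Q3.Monic := monicQ _ _
  have m4 : Q4.Monic := monicQ _ _
  have m5 : Q5.Monic := monicQ _ _
  have d1 : Q1.natDegree = 2 := degQ _ _
  have d2 : Q2.natDegree = 2 := degQ _ _
  have d3 : Q3.natDegree = 2 := degQ _ _
  have d4 : Q4.natDegree = 2 := degQ _ _
  have d5 : Q5.natDegree = 2 := degQ _ _
  have n12 : Q1 ≠ Q2 := Qne (by decide)
  have n13 : Q1 ≠ Q3 := Qne (by decide)
  have n14 : Q1 ≠ Q4 := Qne (by decide)
  have n15 : Q1 ≠ Q5 := Qne (by decide)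
  have n23 : Q2 ≠ Q3 := Qne (by decide)
  have n24 : Q2 ≠ Q4 := Qne (by decide)
  have n25 : Q2 ≠ Q5 := Qne (by decide)
  have n34 : Q3 ≠ Q4 := Qne (by decide)
  have n35 : Q3 ≠ Q5 := Qne (by decide)
  have n45 : Q4 ≠ Q5 := Qne (by decide)
  rcases hd1 with h1|h1 <;> rcases hd2 with h2|h2 <;> rcases hd3 with h3|h3 <;>
    rcases hd4 with h4|h4 <;> rcases hd5 with h5|h5 <;>
    first
    | exact no3 hQ1 hQ2 hQ3 m1 m2 m3 d1 d2 d3 n12 n13 n23 hAm hAdeg h1 h2 h3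
    | exact no3 hQ1 hQ2 hQ4 m1 m2 m4 d1 d2 d4 n12 n14 n24 hAm hAdeg h1 h2 h4
    | exact no3 hQ1 hQ2 hQ5 m1 m2 m5 d1 d2 d5 n12 n15 n25 hAm hAdeg h1 h2 h5
    | exact no3 hQ1 hQ3 hQ4 m1 m3 m4 d1 d3 d4 n13 n14 n34 hAm hAdeg h1 h3 h4
    | exact no3 hQ1 hQ3 hQ5 m1 m3 m5 d1 d3 d5 n13 n15 n35 hAm hAdeg h1 h3 h5
    | exact no3 hQ1 hQ4 hQ5 m1 m4 m5 d1 d4 d5 n14 n15 n45 hAm hAdeg h1 h4 h5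
    | exact no3 hQ2 hQ3 hQ4 m2 m3 m4 d2 d3 d4 n23 n24 n34 hAm hAdeg h2 h3 h4
    | exact no3 hQ2 hQ3 hQ5 m2 m3 m5 d2 d3 d5 n23 n25 n35 hAm hAdeg h2 h3 h5
    | exact no3 hQ2 hQ4 hQ5 m2 m4 m5 d2 d4 d5 n24 n25 n45 hAm hAdeg h2 h4 h5
    | exact no3 hQ3 hQ4 hQ5 m3 m4 m5 d3 d4 d5 n34 n35 n45 hAm hAdeg h3 h4 h5
    | exact no3 hQ1 hQ2 hQ3 m1 m2 m3 d1 d2 d3 n12 n13 n23 hBm hBdeg h1 h2 h3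
    | exact no3 hQ1 hQ2 hQ4 m1 m2 m4 d1 d2 d4 n12 n14 n24 hBm hBdeg h1 h2 h4
    | exact no3 hQ1 hQ2 hQ5 m1 m2 m5 d1 d2 d5 n12 n15 n25 hBm hBdeg h1 h2 h5
    | exact no3 hQ1 hQ3 hQ4 m1 m3 m4 d1 d3 d4 n13 n14 n34 hBm hBdeg h1 h3 h4
    | exact no3 hQ1 hQ3 hQ5 m1 m3 m5 d1 d3 d5 n13 n15 n35 hBm hBdeg h1 h3 h5
    | exact no3 hQ1 hQ4 hQ5 m1 m4 m5 d1 d4 d5 n14 n15 n45 hBm hBdeg h1 h4 h5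
    | exact no3 hQ2 hQ3 hQ4 m2 m3 m4 d2 d3 d4 n23 n24 n34 hBm hBdeg h2 h3 h4
    | exact no3 hQ2 hQ3 hQ5 m2 m3 m5 d2 d3 d5 n23 n25 n35 hBm hBdeg h2 h3 h5
    | exact no3 hQ2 hQ4 hQ5 m2 m4 m5 d2 d4 d5 n24 n25 n45 hBm hBdeg h2 h4 h5
    | exact no3 hQ3 hQ4 hQ5 m3 m4 m5 d3 d4 d5 n34 n35 n45 hBm hBdeg h3 h4 h5
end

section
/- The polynomial g₁(x, 8, 11) = Σ_{j=0}^{8} (8!/j!)·C(19−j, 8−j)·x^j is irreducible over ℚ. -/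
open Polynomial Finset

namespace S19

noncomputable def fZ : ℤ[X] := (3047466240 : ℤ[X]) + 1283143680 * X + 249500160 * X ^ 2 + 29352960 * X ^ 3 + 2293200 * X ^ 4 + 122304 * X ^ 5 + 4368 * X ^ 6 + 96 * X ^ 7 + X ^ 8

instance : Fact (Nat.Prime 23) := ⟨by norm_num⟩

noncomputable abbrev phi : ℤ →+* ZMod 23 := Int.castRingHom (ZMod 23)

noncomputable abbrev F : (ZMod 23)[X] := fZ.map phi


lemma z23 : (23 : (ZMod 23)[X]) = 0 := by
  have : ((23:ℕ) : (ZMod 23)[X]) = 0 := by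
    rw [← Polynomial.C_eq_natCast]; norm_num; decide
  exact_mod_cast this

lemma step_dvd {m n : ℕ} {a b q r s : ℤ[X]} (hab : a * b = q * fZ + r + 23 * s)
    (ha : F ∣ X ^ m - a.map phi) (hb : F ∣ X ^ n - b.map phi) :
    F ∣ X ^ (m + n) - r.map phi := by
  have key : a.map phi * b.map phi = q.map phi * F + r.map phi := by
    have h := congrArg (Polynomial.map phi) hab
    simpa [Polynomial.map_mul, Polynomial.map_add, z23] using h
  have hsplit : X ^ (m + n) - r.map phi
      = X ^ m * (X ^ n - b.map phi) + b.map phi * (X ^ m - a.map phi) + q.map phi * F := by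
    rw [pow_add]; linear_combination key
  rw [hsplit]
  exact dvd_add (dvd_add (Dvd.dvd.mul_left hb _) (Dvd.dvd.mul_left ha _)) (Dvd.dvd.mul_left dvd_rfl _)

lemma base1 : F ∣ X ^ 1 - (X : ℤ[X]).map phi := by
  simp


lemma stp0 : (X) * (X) = (0 : ℤ[X]) * fZ + (X ^ 2) + 23 * (0 : ℤ[X]) := by unfold fZ; ring

lemma stp1 : (X ^ 2) * (X ^ 2) = (0 : ℤ[X]) * fZ + (X ^ 4) + 23 * (0 : ℤ[X]) := by unfold fZ; ring

lemma stp2 : (X ^ 4) * (X) = (0 : ℤ[X]) * fZ + (X ^ 5) + 23 * (0 : ℤ[X]) := by unfold fZ; ring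

lemma stp3 : (X ^ 5) * (X ^ 5) = ((4848 : ℤ[X]) + (-96) * X + X ^ 2) * fZ + ((-3 : ℤ[X]) - X + (-8) * X ^ 2 + (-5) * X ^ 3 + 7 * X ^ 4 + (-10) * X ^ 5 + 11 * X ^ 6 - X ^ 7) + 23 * ((-642352883979 : ℤ[X]) + (-257744513113) * X + (-47367062984) * X ^ 2 + (-5201490365) * X ^ 3 + (-371697809) * X ^ 4 + (-17484154) * X ^ 5 + (-509917) * X ^ 6 + (-7321) * X ^ 7) := by unfold fZ; ring

lemma stp4 : ((-3 : ℤ[X]) - X + (-8) * X ^ 2 + (-5) * X ^ 3 + 7 * X ^ 4 + (-10) * X ^ 5 + 11 * X ^ 6 - X ^ 7) * (X) = ((-1 : ℤ[X])) * fZ + ((4 : ℤ[X]) + (-11) * X + 7 * X ^ 3 + 3 * X ^ 4 + (-3) * X ^ 5 + 11 * X ^ 6 + (-8) * X ^ 7) + 23 * ((132498532 : ℤ[X]) + 55788856 * X + 10847833 * X ^ 2 + 1276215 * X ^ 3 + 99704 * X ^ 4 + 5318 * X ^ 5 + 189 * X ^ 6 + 5 * X ^ 7) := by unfold fZ; ri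ng

lemma stp5 : ((4 : ℤ[X]) + (-11) * X + 7 * X ^ 3 + 3 * X ^ 4 + (-3) * X ^ 5 + 11 * X ^ 6 + (-8) * X ^ 7) * ((4 : ℤ[X]) + (-11) * X + 7 * X ^ 3 + 3 * X ^ 4 + (-3) * X ^ 5 + 11 * X ^ 6 + (-8) * X ^ 7) = ((116350141199 : ℤ[X]) + (-6734072120) * X + 314419979 * X ^ 2 + (-11646162) * X ^ 3 + 327337 * X ^ 4 + (-6320) * X ^ 5 + 64 * X ^ 6) * fZ + ((-8 : ℤ[X]) + (-8) * X + (-6) * X ^ 2 + 7 * X ^ 3 + 11 * X ^ 4 + (-5) * X ^ 5 + (-11) * X ^ 6 + (-4) * X ^ 7) + 23 * ((-15416222927095027032 : ℤ[X]) + (-5598786561007793200) * X + (-928120914561517351) * X ^ 2 + (-91435812722437897) * X ^ 3 + (-5810907764339787) * X ^ 4 + (-239639638441907) * X ^ 5 + (-5980357928326) * X ^ 6 + (-70287782620) * X ^ 7) := by unfold fZ; ring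

lemma stp6 : ((-8 : ℤ[X]) + (-8) * X + (-6) * X ^ 2 + 7 * X ^ 3 + 11 * X ^ 4 + (-5) * X ^ 5 + (-11) * X ^ 6 + (-4) * X ^ 7) * (X) = ((-4 : ℤ[X])) * fZ + ((-7 : ℤ[X]) + 6 * X + (-4) * X ^ 2 + 8 * X ^ 3 + (-7) * X ^ 4 + (-6) * X ^ 5 + 10 * X ^ 6 + 5 * X ^ 7) + 23 * ((529994129 : ℤ[X]) + 223155422 * X + 43391332 * X ^ 2 + 5104862 * X ^ 3 + 398818 * X ^ 4 + 21271 * X ^ 5 + 759 * X ^ 6 + 16 * X ^ 7) := by unfold fZ; ring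

lemma stp7 : ((-7 : ℤ[X]) + 6 * X + (-4) * X ^ 2 + 8 * X ^ 3 + (-7) * X ^ 4 + (-6) * X ^ 5 + 10 * X ^ 6 + 5 * X ^ 7) * ((-7 : ℤ[X]) + 6 * X + (-4) * X ^ 2 + 8 * X ^ 3 + (-7) * X ^ 4 + (-6) * X ^ 5 + 10 * X ^ 6 + 5 * X ^ 7) = ((29737853117 : ℤ[X]) + (-1878113172) * X + 94293336 * X ^ 2 + (-3728830) * X ^ 3 + 111640 * X ^ 4 + (-2300) * X ^ 5 + 25 * X ^ 6) * fZ + ((1 : ℤ[X]) + 6 * X - X ^ 2 + (-2) * X ^ 3 + 5 * X ^ 4 + 8 * X ^ 5 + 9 * X ^ 7) + 23 * ((-3940221888005924784 : ℤ[X]) + (-1410193556403371190) * X + (-230307209647322709) * X ^ 2 + (-22344908292690706) * X ^ 3 + (-1397759167669045) * X ^ 4 + (-56689351649400) * X ^ 5 + (-1389331450420) * X ^ 6 + (-15996845761) * X ^ 7) := by unfold fZ; ring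

lemma stp8 : ((1 : ℤ[X]) + 6 * X - X ^ 2 + (-2) * X ^ 3 + 5 * X ^ 4 + 8 * X ^ 5 + 9 * X ^ 7) * ((1 : ℤ[X]) + 6 * X - X ^ 2 + (-2) * X ^ 3 + 5 * X ^ 4 + 8 * X ^ 5 + 9 * X ^ 7) = ((126287515877 : ℤ[X]) + (-7521619426) * X + 360069004 * X ^ 2 + (-13652838) * X ^ 3 + 392832 * X ^ 4 + (-7776) * X ^ 5 + 81 * X ^ 6) * fZ + ((-10 : ℤ[X]) + (-6) * X + (-6) * X ^ 2 + 3 * X ^ 3 + X ^ 4 + (-9) * X ^ 5 + (-8) * X ^ 6 + 4 * X ^ 7) + 23 * ((-16732910485592238803 : ℤ[X]) + (-6048832460417783874) * X + (-998031961792927720) * X ^ 2 + (-97855689380527973) * X ^ 3 + (-6188547862426258) * X ^ 4 + (-253911273084113) * X ^ 5 + (-6301718509058) * X ^ 6 + (-73607070074) * X ^ 7) := by unfold fZ; ring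

lemma stp9 : ((-10 : ℤ[X]) + (-6) * X + (-6) * X ^ 2 + 3 * X ^ 3 + X ^ 4 + (-9) * X ^ 5 + (-8) * X ^ 6 + 4 * X ^ 7) * ((-7 : ℤ[X]) + 6 * X + (-4) * X ^ 2 + 8 * X ^ 3 + (-7) * X ^ 4 + (-6) * X ^ 5 + 10 * X ^ 6 + 5 * X ^ 7) = ((30378735997 : ℤ[X]) + (-1826552039) * X + 88019735 * X ^ 2 + (-3353441) * X ^ 3 + 96811 * X ^ 4 + (-1920) * X ^ 5 + 20 * X ^ 6) * fZ + ((-5 : ℤ[X]) + (-2) * X + 2 * X ^ 2 + (-5) * X ^ 3 + (-8) * X ^ 4 + (-2) * X ^ 5 - X ^ 6 + 5 * X ^ 7) + 23 * ((-4025137928901314835 : ℤ[X]) + (-1452779453325364592) * X + (-239304693812240972) * X ^ 2 + (-23421881088559476) * X ^ 3 + (-1478383828002185) * X ^ 4 + (-60526903207865) * X ^ 5 + (-1498469933593) * X ^ 6 + (-17449830204) * X ^ 7) := by unfold fZ; ring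

lemma stp10 : ((-5 : ℤ[X]) + (-2) * X + 2 * X ^ 2 + (-5) * X ^ 3 + (-8) * X ^ 4 + (-2) * X ^ 5 - X ^ 6 + 5 * X ^ 7) * ((-5 : ℤ[X]) + (-2) * X + 2 * X ^ 2 + (-5) * X ^ 3 + (-8) * X ^ 4 + (-2) * X ^ 5 - X ^ 6 + 5 * X ^ 7) = ((39639077196 : ℤ[X]) + (-2355671650) * X + 112518594 * X ^ 2 + (-4256332) * X ^ 3 + 122141 * X ^ 4 + (-2410) * X ^ 5 + 25 * X ^ 6) * fZ + ((6 : ℤ[X]) + (-9) * X + X ^ 2 + (-2) * X ^ 3 + (-7) * X ^ 4 + 6 * X ^ 5 + (-11) * X ^ 6 + (-7) * X ^ 7) + 23 * ((-5252119545198428827 : ℤ[X]) + (-1899295719964322837) * X + (-313486414321258519) * X ^ 2 + (-30747403847216972) * X ^ 3 + (-1945153842804183) * X ^ 4 + (-79833469656746) * X ^ 5 + (-1981962172102) * X ^ 6 + (-23157144153) * X ^ 7) := by unfold fZ; ring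

lemma stp11 : ((6 : ℤ[X]) + (-9) * X + X ^ 2 + (-2) * X ^ 3 + (-7) * X ^ 4 + 6 * X ^ 5 + (-11) * X ^ 6 + (-7) * X ^ 7) * ((-7 : ℤ[X]) + 6 * X + (-4) * X ^ 2 + 8 * X ^ 3 + (-7) * X ^ 4 + (-6) * X ^ 5 + 10 * X ^ 6 + 5 * X ^ 7) = ((-42921042116 : ℤ[X]) + 2692280997 * X + (-134437199) * X ^ 2 + 5291228 * X ^ 3 + (-157718) * X ^ 4 + 3235 * X ^ 5 + (-35) * X ^ 6) * fZ + ((-4 : ℤ[X]) + (-2) * X + (-4) * X ^ 2 + 6 * X ^ 3 + (-2) * X ^ 4 + (-9) * X ^ 5 + 2 * X ^ 6 + (-6) * X ^ 7) + 23 * ((5686975079744702774 : ℤ[X]) + 2037792542748181987 * X + 333213754546815273 * X ^ 2 + 32370108540365806 * X ^ 3 + 2027541501737527 * X ^ 4 + 82346093323184 * X ^ 5 + 2021170242010 * X ^ 6 + 23311606151 * X ^ 7) := by unfold fZ; ring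

lemma stp12 : ((-4 : ℤ[X]) + (-2) * X + (-4) * X ^ 2 + 6 * X ^ 3 + (-2) * X ^ 4 + (-9) * X ^ 5 + 2 * X ^ 6 + (-6) * X ^ 7) * ((-4 : ℤ[X]) + (-2) * X + (-4) * X ^ 2 + 6 * X ^ 3 + (-2) * X ^ 4 + (-9) * X ^ 5 + 2 * X ^ 6 + (-6) * X ^ 7) = ((58571015184 : ℤ[X]) + (-3457758132) * X + 164309569 * X ^ 2 + (-6188940) * X ^ 3 + 176944 * X ^ 4 + (-3480) * X ^ 5 + 36 * X ^ 6) * fZ + ((10 : ℤ[X]) + (-10) * X + 2 * X ^ 2 + X ^ 3 + 4 * X ^ 4 + 11 * X ^ 5 + 6 * X ^ 6 + (-5) * X ^ 7) + 23 * ((-7760573539815973398 : ℤ[X]) + (-2809462034399051018) * X + (-464235001311411922) * X ^ 2 + (-45586680782370951) * X ^ 3 + (-2887513532877412) * X ^ 4 + (-118669937904525) * X ^ 5 + (-2950585400226) * X ^ 6 + (-34536218517) * X ^ 7) := by unfold fZ; ring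

lemma stp13 : ((10 : ℤ[X]) + (-10) * X + 2 * X ^ 2 + X ^ 3 + 4 * X ^ 4 + 11 * X ^ 5 + 6 * X ^ 6 + (-5) * X ^ 7) * ((-7 : ℤ[X]) + 6 * X + (-4) * X ^ 2 + 8 * X ^ 3 + (-7) * X ^ 4 + (-6) * X ^ 5 + 10 * X ^ 6 + 5 * X ^ 7) = ((-36312651102 : ℤ[X]) + 2201621507 * X + (-106861447) * X ^ 2 + 4098849 * X ^ 3 + (-119135) * X ^ 4 + 2380 * X ^ 5 + (-25) * X ^ 6) * fZ + ((-3 : ℤ[X]) - X + (-6) * X ^ 2 + 3 * X ^ 3 + 8 * X ^ 4 + 4 * X ^ 5 + (-5) * X ^ 6 + 4 * X ^ 7) + 23 * ((4811372970358425931 : ℤ[X]) + 1734129632597213557 * X + 285246616939308684 * X ^ 2 + 27878537540798614 * X ^ 3 + 1757115621835004 * X ^ 4 + 71829334400411 * X ^ 5 + 1775407347745 * X ^ 6 + 20637684830 * X ^ 7) := by unfold fZ; ring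

lemma stp14 : ((-3 : ℤ[X]) - X + (-6) * X ^ 2 + 3 * X ^ 3 + 8 * X ^ 4 + 4 * X ^ 5 + (-5) * X ^ 6 + 4 * X ^ 7) * ((-3 : ℤ[X]) - X + (-6) * X ^ 2 + 3 * X ^ 3 + 8 * X ^ 4 + 4 * X ^ 5 + (-5) * X ^ 6 + 4 * X ^ 7) = ((28773731324 : ℤ[X]) + (-1667997134) * X + 77997896 * X ^ 2 + (-2893512) * X ^ 3 + 81465 * X ^ 4 + (-1576) * X ^ 5 + 16 * X ^ 6) * fZ + ((-9 : ℤ[X]) + (-2) * X + 6 * X ^ 2 + 6 * X ^ 3 + (-4) * X ^ 4 + 9 * X ^ 5 + (-11) * X ^ 6 - X ^ 7) + 23 * ((-3812477165596543554 : ℤ[X]) + (-1384246371483777224) * X + (-229411588836340423) * X ^ 2 + (-22595359128793044) * X ^ 3 + (-1435618489168738) * X ^ 4 + (-59189448507347) * X ^ 5 + (-1476722852730) * X ^ 6 + (-17351157083) * X ^ 7) := by unfold fZ; ring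

lemma stp15 : ((-9 : ℤ[X]) + (-2) * X + 6 * X ^ 2 + 6 * X ^ 3 + (-4) * X ^ 4 + 9 * X ^ 5 + (-11) * X ^ 6 - X ^ 7) * ((-9 : ℤ[X]) + (-2) * X + 6 * X ^ 2 + 6 * X ^ 3 + (-4) * X ^ 4 + 9 * X ^ 5 + (-11) * X ^ 6 - X ^ 7) = ((4725500 : ℤ[X]) + (-13236216) * X + 1250077 * X ^ 2 + (-71806) * X ^ 3 + 2839 * X ^ 4 + (-74) * X ^ 5 + X ^ 6) * fZ + ((10 : ℤ[X]) + 8 * X + X ^ 2 + 11 * X ^ 3 + 8 * X ^ 4 - X ^ 5 + 7 * X ^ 6 + (-7) * X ^ 7) + 23 * ((-626121813787823 : ℤ[X]) + 1490148954152516 * X + 521538541153665 * X ^ 2 + 77327328525239 * X ^ 3 + 6490297787732 * X ^ 4 + 329572125409 * X ^ 5 + 9687715609 * X ^ 6 + 129785223 * X ^ 7) := by unfold fZ; ring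

lemma stp16 : ((10 : ℤ[X]) + 8 * X + X ^ 2 + 11 * X ^ 3 + 8 * X ^ 4 - X ^ 5 + 7 * X ^ 6 + (-7) * X ^ 7) * ((-3 : ℤ[X]) - X + (-6) * X ^ 2 + 3 * X ^ 3 + 8 * X ^ 4 + 4 * X ^ 5 + (-5) * X ^ 6 + 4 * X ^ 7) = ((-49569524639 : ℤ[X]) + 2882673540 * X + (-135163789) * X ^ 2 + 5026617 * X ^ 3 + (-141859) * X ^ 4 + 2751 * X ^ 5 + (-28) * X ^ 6) * fZ + ((10 : ℤ[X]) + 8 * X + (-8) * X ^ 2 + (-6) * X ^ 4 + (-6) * X ^ 5 + (-5) * X ^ 6 + 2 * X ^ 7) + 23 * ((6567889255226116840 : ℤ[X]) + 2383477042045471386 * X + 394809872958617319 * X ^ 2 + 38865255673961236 * X ^ 3 + 2467985149964883 * X ^ 4 + 101693983713126 * X ^ 5 + 2535562442344 * X ^ 6 + 29770648858 * X ^ 7) := by unfold fZ; ring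

lemma stp17 : ((10 : ℤ[X]) + 8 * X + (-8) * X ^ 2 + (-6) * X ^ 4 + (-6) * X ^ 5 + (-5) * X ^ 6 + 2 * X ^ 7) * ((10 : ℤ[X]) + 8 * X + (-8) * X ^ 2 + (-6) * X ^ 4 + (-6) * X ^ 5 + (-5) * X ^ 6 + 2 * X ^ 7) = ((8055758788 : ℤ[X]) + (-459000728) * X + 21116304 * X ^ 2 + (-770556) * X ^ 3 + 21313 * X ^ 4 + (-404) * X ^ 5 + 4 * X ^ 6) * fZ + (5 * X + (-2) * X ^ 2 + (-8) * X ^ 3 + 11 * X ^ 4 + (-2) * X ^ 5 + 4 * X ^ 6 + (-7) * X ^ 7) + 23 * ((-1067376214957100740 : ℤ[X]) + (-388604641465705955) * X + (-64578280297060178) * X ^ 2 + (-6377679088009800) * X ^ 3 + (-406311906816629) * X ^ 4 + (-16798247809562) * X ^ 5 + (-420310215832) * X ^ 6 + (-4953966759) * X ^ 7) := by unfold fZ; ring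

lemma stp18 : (5 * X + (-2) * X ^ 2 + (-8) * X ^ 3 + 11 * X ^ 4 + (-2) * X ^ 5 + 4 * X ^ 6 + (-7) * X ^ 7) * ((-3 : ℤ[X]) - X + (-6) * X ^ 2 + 3 * X ^ 3 + 8 * X ^ 4 + 4 * X ^ 5 + (-5) * X ^ 6 + 4 * X ^ 7) = ((-48411360321 : ℤ[X]) + 2827615650 * X + (-133090452) * X ^ 2 + 4967390 * X ^ 3 + (-140696) * X ^ 4 + 2739 * X ^ 5 + (-28) * X ^ 6) * fZ + ((8 : ℤ[X]) + 4 * X + (-8) * X ^ 2 + 5 * X ^ 3 + (-4) * X ^ 4 + (-4) * X ^ 5 + 2 * X ^ 6 + 6 * X ^ 7) + 23 * ((6414434183074915784 : ℤ[X]) + 2326159469696663707 * X + 385043202368560863 * X ^ 2 + 37876625433940257 * X ^ 3 + 2403435770098842 * X ^ 4 + 98958047454135 * X ^ 5 + 2465305000130 * X ^ 6 + 28918803041 * X ^ 7) := by unfold fZ; ring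

lemma stp19 : ((8 : ℤ[X]) + 4 * X + (-8) * X ^ 2 + 5 * X ^ 3 + (-4) * X ^ 4 + (-4) * X ^ 5 + 2 * X ^ 6 + 6 * X ^ 7) * ((8 : ℤ[X]) + 4 * X + (-8) * X ^ 2 + 5 * X ^ 3 + (-4) * X ^ 4 + (-4) * X ^ 5 + 2 * X ^ 6 + 6 * X ^ 7) = ((53444789368 : ℤ[X]) + (-3218782508) * X + 155475900 * X ^ 2 + (-5941312) * X ^ 3 + 172180 * X ^ 4 + (-3432) * X ^ 5 + 36 * X ^ 6) * fZ + ((-6 : ℤ[X]) + 3 * X + 9 * X ^ 2 + (-2) * X ^ 3 + (-6) * X ^ 4 + (-3) * X ^ 5 + 10 * X ^ 6 + (-3) * X ^ 7) + 23 * ((-7081356143603953750 : ℤ[X]) + (-2555139681715124533) * X + (-420788287931789807) * X ^ 2 + (-41176868891831874) * X ^ 3 + (-2598748456187518) * X ^ 4 + (-106390948924315) * X ^ 5 + (-2634087031351) * X ^ 6 + (-30681167635) * X ^ 7) := by unfold fZ; ring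

lemma stp20 : ((-6 : ℤ[X]) + 3 * X + 9 * X ^ 2 + (-2) * X ^ 3 + (-6) * X ^ 4 + (-3) * X ^ 5 + 10 * X ^ 6 + (-3) * X ^ 7) * ((-3 : ℤ[X]) - X + (-6) * X ^ 2 + 3 * X ^ 3 + 8 * X ^ 4 + 4 * X ^ 5 + (-5) * X ^ 6 + 4 * X ^ 7) = ((-24037051403 : ℤ[X]) + 1367295790 * X + (-62861871) * X ^ 2 + 2294359 * X ^ 3 + (-63530) * X ^ 4 + 1207 * X ^ 5 + (-12) * X ^ 6) * fZ + ((-11 : ℤ[X]) + 5 * X + 8 * X ^ 2 + 5 * X ^ 3 + 2 * X ^ 4 + 6 * X ^ 6 + (-6) * X ^ 7) + 23 * ((3184874028686397163 : ℤ[X]) + 1159834905803280584 * X + 192799158652319666 * X ^ 2 + 19047257429111372 * X ^ 3 + 1213967295541155 * X ^ 4 + 50214074034522 * X ^ 5 + 1257185703945 * X ^ 6 + 14829900686 * X ^ 7) := by unfold fZ; ring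

lemma stp21 : ((-11 : ℤ[X]) + 5 * X + 8 * X ^ 2 + 5 * X ^ 3 + 2 * X ^ 4 + 6 * X ^ 6 + (-6) * X ^ 7) * ((-11 : ℤ[X]) + 5 * X + 8 * X ^ 2 + 5 * X ^ 3 + 2 * X ^ 4 + 6 * X ^ 6 + (-6) * X ^ 7) = ((62678818984 : ℤ[X]) + (-3657981348) * X + 172024668 * X ^ 2 + (-6414360) * X ^ 3 + 181476 * X ^ 4 + (-3528) * X ^ 5 + 36 * X ^ 6) * fZ + ((3 : ℤ[X]) + (-7) * X + (-8) * X ^ 2 + 6 * X ^ 3 + 4 * X ^ 4 + (-9) * X ^ 5 + (-6) * X ^ 6 + 3 * X ^ 7) + 23 * ((-8304851513774395654 : ℤ[X]) + (-3012102425417562161) * X + (-498647786306615881) * X ^ 2 + (-49057684994724732) * X ^ 3 + (-3113268094938738) * X ^ 4 + (-128197614081829) * X ^ 5 + (-3194039808963) * X ^ 6 + (-37470135401) * X ^ 7) := by unfold fZ; ring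

lemma stp22 : ((3 : ℤ[X]) + (-7) * X + (-8) * X ^ 2 + 6 * X ^ 3 + 4 * X ^ 4 + (-9) * X ^ 5 + (-6) * X ^ 6 + 3 * X ^ 7) * ((3 : ℤ[X]) + (-7) * X + (-8) * X ^ 2 + 6 * X ^ 3 + 4 * X ^ 4 + (-9) * X ^ 5 + (-6) * X ^ 6 + 3 * X ^ 7) = ((17193249322 : ℤ[X]) + (-989149728) * X + 45893013 * X ^ 2 + (-1688124) * X ^ 3 + 47070 * X ^ 4 + (-900) * X ^ 5 + 9 * X ^ 6) * fZ + ((-11 : ℤ[X]) + (-10) * X - X ^ 2 + 2 * X ^ 4 + X ^ 5 + 4 * X ^ 6) + 23 * ((-2278080298465125620 : ℤ[X]) + (-828130817556669664) * X + (-137406723585711026) * X ^ 2 + (-13548807517691764) * X ^ 3 + (-861771288080786) * X ^ 4 + (-35567322999945) * X ^ 5 + (-888266795002) * X ^ 6 + (-10447000182) * X ^ 7) := by unfold fZ; ring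

lemma stp23 : ((-11 : ℤ[X]) + (-10) * X - X ^ 2 + 2 * X ^ 4 + X ^ 5 + 4 * X ^ 6) * ((-11 : ℤ[X]) + 5 * X + 8 * X ^ 2 + 5 * X ^ 3 + 2 * X ^ 4 + 6 * X ^ 6 + (-6) * X ^ 7) = ((2302538879 : ℤ[X]) + (-109544708) * X + 4129076 * X ^ 2 + (-118086) * X ^ 3 + 2322 * X ^ 4 + (-24) * X ^ 5) * fZ + ((2 : ℤ[X]) + 7 * X + 3 * X ^ 2 + (-7) * X ^ 3 + (-4) * X ^ 4 + (-5) * X ^ 5 + 4 * X ^ 6 + 11 * X ^ 7) + 23 * ((-305083021740867167 : ℤ[X]) + (-113941496136629424) * X + (-19413279942672590) * X ^ 2 + (-1964923657208771) * X ^ 3 + (-128281772167486) * X ^ 4 + (-5436792951219) * X ^ 5 + (-139604401225) * X ^ 6 + (-1692596217) * X ^ 7) := by unfold fZ; ring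

lemma stp24 : ((2 : ℤ[X]) + 7 * X + 3 * X ^ 2 + (-7) * X ^ 3 + (-4) * X ^ 4 + (-5) * X ^ 5 + 4 * X ^ 6 + 11 * X ^ 7) * ((2 : ℤ[X]) + 7 * X + 3 * X ^ 2 + (-7) * X ^ 3 + (-4) * X ^ 4 + (-5) * X ^ 5 + 4 * X ^ 6 + 11 * X ^ 7) = ((179177710008 : ℤ[X]) + (-10794765934) * X + 521589487 * X ^ 2 + (-19938944) * X ^ 3 + 578066 * X ^ 4 + (-11528) * X ^ 5 + 121 * X ^ 6) * fZ + ((5 : ℤ[X]) + 8 * X + 8 * X ^ 2 + (-11) * X ^ 3 + 5 * X ^ 4 + (-3) * X ^ 5 - X ^ 6 + 8 * X ^ 7) + 23 * ((-23740783574343049127 : ℤ[X]) + (-8565828758307429620) * X + (-1410572086213461869) * X ^ 2 + (-138026579224265905) * X ^ 3 + (-8710685174831170) * X ^ 4 + (-356592590381669) * X ^ 5 + (-8828321434772) * X ^ 6 + (-102825544102) * X ^ 7) := by unfold fZ; ring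

lemma stp25 : ((5 : ℤ[X]) + 8 * X + 8 * X ^ 2 + (-11) * X ^ 3 + 5 * X ^ 4 + (-3) * X ^ 5 - X ^ 6 + 8 * X ^ 7) * ((-11 : ℤ[X]) + 5 * X + 8 * X ^ 2 + 5 * X ^ 3 + 2 * X ^ 4 + 6 * X ^ 6 + (-6) * X ^ 7) = ((-79406596389 : ℤ[X]) + 4680541859 * X + (-221996986) * X ^ 2 + 8343040 * X ^ 3 + (-237876) * X ^ 4 + 4662 * X ^ 5 + (-48) * X ^ 6) * fZ + ((-3 : ℤ[X]) + (-2) * X + 8 * X ^ 2 - X ^ 3 + (-2) * X ^ 4 + (-6) * X ^ 5 + (-3) * X ^ 6 + 11 * X ^ 7) + 23 * ((10521257466468843796 : ℤ[X]) + 3809838217680297013 * X + 629681700825059728 * X ^ 2 + 61845721811358397 * X ^ 3 + 3918057931806042 * X ^ 4 + 161044626408976 * X ^ 5 + 4004519695842 * X ^ 6 + 46872709763 * X ^ 7) := by unfold fZ; ring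

lemma stp26 : ((-3 : ℤ[X]) + (-2) * X + 8 * X ^ 2 - X ^ 3 + (-2) * X ^ 4 + (-6) * X ^ 5 + (-3) * X ^ 6 + 11 * X ^ 7) * ((-3 : ℤ[X]) + (-2) * X + 8 * X ^ 2 - X ^ 3 + (-2) * X ^ 4 + (-6) * X ^ 5 + (-3) * X ^ 6 + 11 * X ^ 7) = ((193284816068 : ℤ[X]) + (-11472583570) * X + 547368698 * X ^ 2 + (-20682632) * X ^ 3 + 592821 * X ^ 4 + (-11682) * X ^ 5 + 121 * X ^ 6) * fZ + ((-3 : ℤ[X]) + (-5) * X + 8 * X ^ 2 + X ^ 3 + (-7) * X ^ 4 + 10 * X ^ 5 + 5 * X ^ 6 + (-11) * X ^ 7) + 23 * ((-25609954420514762796 : ℤ[X]) + (-9263038220107085801) * X + (-1529204654843782124) * X ^ 2 + (-150017091348572829) * X ^ 3 + (-9492297598154751) * X ^ 4 + (-389661870651618) * X ^ 5 + (-9675766843446) * X ^ 6 + (-113074672305) * X ^ 7) := by unfold fZ; ring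

lemma stp27 : ((-3 : ℤ[X]) + (-5) * X + 8 * X ^ 2 + X ^ 3 + (-7) * X ^ 4 + 10 * X ^ 5 + 5 * X ^ 6 + (-11) * X ^ 7) * ((-11 : ℤ[X]) + 5 * X + 8 * X ^ 2 + 5 * X ^ 3 + 2 * X ^ 4 + 6 * X ^ 6 + (-6) * X ^ 7) = ((111131870067 : ℤ[X]) + (-6529806325) * X + 308839395 * X ^ 2 + (-11575792) * X ^ 3 + 329154 * X ^ 4 + (-6432) * X ^ 5 + 66 * X ^ 6) * fZ + ((-8 : ℤ[X]) + (-9) * X + (-9) * X ^ 2 + (-6) * X ^ 3 + 10 * X ^ 4 + 10 * X ^ 5 + 4 * X ^ 6 + (-8) * X ^ 7) + 23 * ((-14724809661619523393 : ℤ[X]) + (-5334730104081576457) * X + (-882170316309237376) * X ^ 2 + (-86690004193623820) * X ^ 3 + (-5494940017214865) * X ^ 4 + (-225985191126435) * X ^ 5 + (-5622662827666) * X ^ 6 + (-65856491301) * X ^ 7) := by unfold fZ; ring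

set_option maxRecDepth 10000 in
lemma chain : (F ∣ X ^ (23^1) - ((-7 : ℤ[X]) + 6 * X + (-4) * X ^ 2 + 8 * X ^ 3 + (-7) * X ^ 4 + (-6) * X ^ 5 + 10 * X ^ 6 + 5 * X ^ 7).map phi) ∧ (F ∣ X ^ (23^2) - ((-3 : ℤ[X]) - X + (-6) * X ^ 2 + 3 * X ^ 3 + 8 * X ^ 4 + 4 * X ^ 5 + (-5) * X ^ 6 + 4 * X ^ 7).map phi) ∧ (F ∣ X ^ (23^3) - ((-11 : ℤ[X]) + 5 * X + 8 * X ^ 2 + 5 * X ^ 3 + 2 * X ^ 4 + 6 * X ^ 6 + (-6) * X ^ 7).map phi) ∧ (F ∣ X ^ (23^4) - ((-8 : ℤ[X]) + (-9) * X + (-9) * X ^ 2 + (-6) * X ^ 3 + 10 * X ^ 4 + 10 * X ^ 5 + 4 * X ^ 6 + (-8) * X ^ 7).map phi) := by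
  have h1 := base1
  have h2 : F ∣ X ^ 2 - (X ^ 2).map phi := step_dvd (m := 1) (n := 1) stp0 h1 h1
  have h4 : F ∣ X ^ 4 - (X ^ 4).map phi := step_dvd (m := 2) (n := 2) stp1 h2 h2
  have h5 : F ∣ X ^ 5 - (X ^ 5).map phi := step_dvd (m := 4) (n := 1) stp2 h4 h1
  have h10 : F ∣ X ^ 10 - ((-3 : ℤ[X]) - X + (-8) * X ^ 2 + (-5) * X ^ 3 + 7 * X ^ 4 + (-10) * X ^ 5 + 11 * X ^ 6 - X ^ 7).map phi := step_dvd (m := 5) (n := 5) stp3 h5 h5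
  have h11 : F ∣ X ^ 11 - ((4 : ℤ[X]) + (-11) * X + 7 * X ^ 3 + 3 * X ^ 4 + (-3) * X ^ 5 + 11 * X ^ 6 + (-8) * X ^ 7).map phi := step_dvd (m := 10) (n := 1) stp4 h10 h1
  have h22 : F ∣ X ^ 22 - ((-8 : ℤ[X]) + (-8) * X + (-6) * X ^ 2 + 7 * X ^ 3 + 11 * X ^ 4 + (-5) * X ^ 5 + (-11) * X ^ 6 + (-4) * X ^ 7).map phi := step_dvd (m := 11) (n := 11) stp5 h11 h11
  have h23 : F ∣ X ^ 23 - ((-7 : ℤ[X]) + 6 * X + (-4) * X ^ 2 + 8 * X ^ 3 + (-7) * X ^ 4 + (-6) * X ^ 5 + 10 * X ^ 6 + 5 * X ^ 7).map phi := step_dvd (m := 22) (n := 1) stp6 h22 h1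
  have h46 : F ∣ X ^ 46 - ((1 : ℤ[X]) + 6 * X - X ^ 2 + (-2) * X ^ 3 + 5 * X ^ 4 + 8 * X ^ 5 + 9 * X ^ 7).map phi := step_dvd (m := 23) (n := 23) stp7 h23 h23
  have h92 : F ∣ X ^ 92 - ((-10 : ℤ[X]) + (-6) * X + (-6) * X ^ 2 + 3 * X ^ 3 + X ^ 4 + (-9) * X ^ 5 + (-8) * X ^ 6 + 4 * X ^ 7).map phi := step_dvd (m := 46) (n := 46) stp8 h46 h46
  have h115 : F ∣ X ^ 115 - ((-5 : ℤ[X]) + (-2) * X + 2 * X ^ 2 + (-5) * X ^ 3 + (-8) * X ^ 4 + (-2) * X ^ 5 - X ^ 6 + 5 * X ^ 7).map phi := step_dvd (m := 92) (n := 23) stp9 h92 h23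
  have h230 : F ∣ X ^ 230 - ((6 : ℤ[X]) + (-9) * X + X ^ 2 + (-2) * X ^ 3 + (-7) * X ^ 4 + 6 * X ^ 5 + (-11) * X ^ 6 + (-7) * X ^ 7).map phi := by
    rw [show 230 = 115 + 115 by norm_num]; exact step_dvd stp10 h115 h115
  have h253 : F ∣ X ^ 253 - ((-4 : ℤ[X]) + (-2) * X + (-4) * X ^ 2 + 6 * X ^ 3 + (-2) * X ^ 4 + (-9) * X ^ 5 + 2 * X ^ 6 + (-6) * X ^ 7).map phi := by
    rw [show 253 = 230 + 23 by norm_num]; exact step_dvd stp11 h230 h23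
  have h506 : F ∣ X ^ 506 - ((10 : ℤ[X]) + (-10) * X + 2 * X ^ 2 + X ^ 3 + 4 * X ^ 4 + 11 * X ^ 5 + 6 * X ^ 6 + (-5) * X ^ 7).map phi := by
    rw [show 506 = 253 + 253 by norm_num]; exact step_dvd stp12 h253 h253
  have h529 : F ∣ X ^ 529 - ((-3 : ℤ[X]) - X + (-6) * X ^ 2 + 3 * X ^ 3 + 8 * X ^ 4 + 4 * X ^ 5 + (-5) * X ^ 6 + 4 * X ^ 7).map phi := by
    rw [show 529 = 506 + 23 by norm_num]; exact step_dvd stp13 h506 h23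
  have h1058 : F ∣ X ^ 1058 - ((-9 : ℤ[X]) + (-2) * X + 6 * X ^ 2 + 6 * X ^ 3 + (-4) * X ^ 4 + 9 * X ^ 5 + (-11) * X ^ 6 - X ^ 7).map phi := by
    rw [show 1058 = 529 + 529 by norm_num]; exact step_dvd stp14 h529 h529
  have h2116 : F ∣ X ^ 2116 - ((10 : ℤ[X]) + 8 * X + X ^ 2 + 11 * X ^ 3 + 8 * X ^ 4 - X ^ 5 + 7 * X ^ 6 + (-7) * X ^ 7).map phi := by
    rw [show 2116 = 1058 + 1058 by norm_num]; exact step_dvd stp15 h1058 h1058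
  have h2645 : F ∣ X ^ 2645 - ((10 : ℤ[X]) + 8 * X + (-8) * X ^ 2 + (-6) * X ^ 4 + (-6) * X ^ 5 + (-5) * X ^ 6 + 2 * X ^ 7).map phi := by
    rw [show 2645 = 2116 + 529 by norm_num]; exact step_dvd stp16 h2116 h529
  have h5290 : F ∣ X ^ 5290 - (5 * X + (-2) * X ^ 2 + (-8) * X ^ 3 + 11 * X ^ 4 + (-2) * X ^ 5 + 4 * X ^ 6 + (-7) * X ^ 7).map phi := by
    rw [show 5290 = 2645 + 2645 by norm_num]; exact step_dvd stp17 h2645 h2645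
  have h5819 : F ∣ X ^ 5819 - ((8 : ℤ[X]) + 4 * X + (-8) * X ^ 2 + 5 * X ^ 3 + (-4) * X ^ 4 + (-4) * X ^ 5 + 2 * X ^ 6 + 6 * X ^ 7).map phi := by
    rw [show 5819 = 5290 + 529 by norm_num]; exact step_dvd stp18 h5290 h529
  have h11638 : F ∣ X ^ 11638 - ((-6 : ℤ[X]) + 3 * X + 9 * X ^ 2 + (-2) * X ^ 3 + (-6) * X ^ 4 + (-3) * X ^ 5 + 10 * X ^ 6 + (-3) * X ^ 7).map phi := by
    rw [show 11638 = 5819 + 5819 by norm_num]; exact step_dvd stp19 h5819 h5819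
  have h12167 : F ∣ X ^ 12167 - ((-11 : ℤ[X]) + 5 * X + 8 * X ^ 2 + 5 * X ^ 3 + 2 * X ^ 4 + 6 * X ^ 6 + (-6) * X ^ 7).map phi := by
    rw [show 12167 = 11638 + 529 by norm_num]; exact step_dvd stp20 h11638 h529
  have h24334 : F ∣ X ^ 24334 - ((3 : ℤ[X]) + (-7) * X + (-8) * X ^ 2 + 6 * X ^ 3 + 4 * X ^ 4 + (-9) * X ^ 5 + (-6) * X ^ 6 + 3 * X ^ 7).map phi := by
    rw [show 24334 = 12167 + 12167 by norm_num]; exact step_dvd stp21 h12167 h12167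
  have h48668 : F ∣ X ^ 48668 - ((-11 : ℤ[X]) + (-10) * X - X ^ 2 + 2 * X ^ 4 + X ^ 5 + 4 * X ^ 6).map phi := by
    rw [show 48668 = 24334 + 24334 by norm_num]; exact step_dvd stp22 h24334 h24334
  have h60835 : F ∣ X ^ 60835 - ((2 : ℤ[X]) + 7 * X + 3 * X ^ 2 + (-7) * X ^ 3 + (-4) * X ^ 4 + (-5) * X ^ 5 + 4 * X ^ 6 + 11 * X ^ 7).map phi := by
    rw [show 60835 = 48668 + 12167 by norm_num]; exact step_dvd stp23 h48668 h12167
  have h121670 : F ∣ X ^ 121670 - ((5 : ℤ[X]) + 8 * X + 8 * X ^ 2 + (-11) * X ^ 3 + 5 * X ^ 4 + (-3) * X ^ 5 - X ^ 6 + 8 * X ^ 7).map phi := by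
    rw [show 121670 = 60835 + 60835 by norm_num]; exact step_dvd stp24 h60835 h60835
  have h133837 : F ∣ X ^ 133837 - ((-3 : ℤ[X]) + (-2) * X + 8 * X ^ 2 - X ^ 3 + (-2) * X ^ 4 + (-6) * X ^ 5 + (-3) * X ^ 6 + 11 * X ^ 7).map phi := by
    rw [show 133837 = 121670 + 12167 by norm_num]; exact step_dvd stp25 h121670 h12167
  have h267674 : F ∣ X ^ 267674 - ((-3 : ℤ[X]) + (-5) * X + 8 * X ^ 2 + X ^ 3 + (-7) * X ^ 4 + 10 * X ^ 5 + 5 * X ^ 6 + (-11) * X ^ 7).map phi := by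
    rw [show 267674 = 133837 + 133837 by norm_num]; exact step_dvd stp26 h133837 h133837
  have h279841 : F ∣ X ^ 279841 - ((-8 : ℤ[X]) + (-9) * X + (-9) * X ^ 2 + (-6) * X ^ 3 + 10 * X ^ 4 + 10 * X ^ 5 + 4 * X ^ 6 + (-8) * X ^ 7).map phi := by
    rw [show 279841 = 267674 + 12167 by norm_num]; exact step_dvd stp27 h267674 h12167
  simp only [show (23:ℕ) ^ 1 = 23 by norm_num, show (23:ℕ) ^ 2 = 529 by norm_num, show (23:ℕ) ^ 3 = 12167 by norm_num,
    show (23:ℕ) ^ 4 = 279841 by norm_num]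
  exact ⟨h23, h529, h12167, h279841⟩

lemma bz1 : ((-8 : ℤ[X]) + (-10) * X + (-4) * X ^ 2 + 4 * X ^ 3 + (-4) * X ^ 4 + 9 * X ^ 5 + (-2) * X ^ 6) * fZ + ((-8 : ℤ[X]) + X + 10 * X ^ 2 + (-11) * X ^ 3 + (-3) * X ^ 4 + 10 * X ^ 5 - X ^ 6 + 5 * X ^ 7) * (((-7 : ℤ[X]) + 6 * X + (-4) * X ^ 2 + 8 * X ^ 3 + (-7) * X ^ 4 + (-6) * X ^ 5 + 10 * X ^ 6 + 5 * X ^ 7) - X) = 1 + 23 * ((-1059988255 : ℤ[X]) + (-1771296169) * X + (-1174665351) * X ^ 2 + 188150653 * X ^ 3 + (-363789830) * X ^ 4 + 1006578256 * X ^ 5 + 198362647 * X ^ 6 + (-18676467) * X ^ 7 + (-10588061) * X ^ 8 + (-1675626) * X ^ 9 + (-152298) * X ^ 10 + (-8940) * X ^ 11 + (-342) * X ^ 12 + (-6) * X ^ 13 + X ^ 14) := by unfold fZ; ring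

lemma bz2 : ((-10 : ℤ[X]) + 6 * X + 10 * X ^ 2 + 10 * X ^ 3 + (-4) * X ^ 4 + 9 * X ^ 5 + 7 * X ^ 6) * fZ + ((-6 : ℤ[X]) + 8 * X + (-7) * X ^ 2 + (-2) * X ^ 3 + 5 * X ^ 4 + 2 * X ^ 5 + (-10) * X ^ 6 + 4 * X ^ 7) * (((-3 : ℤ[X]) - X + (-6) * X ^ 2 + 3 * X ^ 3 + 8 * X ^ 4 + 4 * X ^ 5 + (-5) * X ^ 6 + 4 * X ^ 7) - X) = 1 + 23 * ((-1324985321 : ℤ[X]) + 237102636 * X + 1551240127 * X ^ 2 + 1935198718 * X ^ 3 + 143033009 * X ^ 4 + 1091116905 * X ^ 5 + 1399987300 * X ^ 6 + 484098937 * X ^ 7 + 87077061 * X ^ 8 + 9811518 * X ^ 9 + 745067 * X ^ 10 + 38916 * X ^ 11 + 1370 * X ^ 12 + 27 * X ^ 13 + X ^ 14) := by unfold fZ; ring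

lemma bz3 : (4 * X + 4 * X ^ 2 + (-7) * X ^ 3 + (-3) * X ^ 4 + (-7) * X ^ 5 + 5 * X ^ 6) * fZ + ((2 : ℤ[X]) + (-2) * X + (-7) * X ^ 2 + (-4) * X ^ 3 + 9 * X ^ 4 + 3 * X ^ 6 + (-3) * X ^ 7) * (((-11 : ℤ[X]) + 5 * X + 8 * X ^ 2 + 5 * X ^ 3 + 2 * X ^ 4 + 6 * X ^ 6 + (-6) * X ^ 7) - X) = 1 + 23 * ((-1 : ℤ[X]) + 529994130 * X + 753149555 * X ^ 2 + (-660942970) * X ^ 3 + (-739521399) * X ^ 4 + (-1165287445) * X ^ 5 + 230913751 * X ^ 6 + 198504902 * X ^ 7 + 44970096 * X ^ 8 + 5665883 * X ^ 9 + 460703 * X ^ 10 + 25243 * X ^ 11 + 921 * X ^ 12 + 19 * X ^ 13 + X ^ 14) := by unfold fZ; ring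

lemma bz4 : ((-3 : ℤ[X]) + X + (-11) * X ^ 2 + 6 * X ^ 3 + (-4) * X ^ 4 + 5 * X ^ 5 + (-11) * X ^ 6) * fZ + ((7 : ℤ[X]) + (-11) * X - X ^ 2 + (-9) * X ^ 3 + (-7) * X ^ 4 + 6 * X ^ 5 + (-7) * X ^ 6 + (-10) * X ^ 7) * (((-8 : ℤ[X]) + (-9) * X + (-9) * X ^ 2 + (-6) * X ^ 3 + 10 * X ^ 4 + 10 * X ^ 5 + 4 * X ^ 6 + (-8) * X ^ 7) - X) = 1 + 23 * ((-397495599 : ℤ[X]) + (-34868034) * X + (-1434238495) * X ^ 2 + 188332973 * X ^ 3 + (-313610043) * X ^ 4 + 490469619 * X ^ 5 + (-1215365613) * X ^ 6 + (-564003202) * X ^ 7 + (-113314080) * X ^ 8 + (-13560023) * X ^ 9 + (-1070891) * X ^ 10 + (-57564) * X ^ 11 + (-2076) * X ^ 12 + (-45) * X ^ 13 + 3 * X ^ 14) := by unfold fZ; ring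

lemma irred_dvd_pow {p : ℕ} [Fact p.Prime] {q : (ZMod p)[X]}
    (hq : Irreducible q) (hm : q.Monic) : q ∣ X ^ p ^ q.natDegree - X := by
  haveI : Fact (Irreducible q) := ⟨hq⟩
  haveI : Module.Finite (ZMod p) (AdjoinRoot q) := (AdjoinRoot.powerBasis hm.ne_zero).finite
  haveI : Finite (AdjoinRoot q) := Module.finite_of_finite (ZMod p)
  haveI : Fintype (AdjoinRoot q) := Fintype.ofFinite _
  have hcard : Fintype.card (AdjoinRoot q) = p ^ q.natDegree := by
    rw [Module.card_eq_pow_finrank (K := ZMod p) (V := AdjoinRoot q), ZMod.card,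
      (AdjoinRoot.powerBasis hm.ne_zero).finrank, AdjoinRoot.powerBasis_dim]
  have hroot : (AdjoinRoot.root q) ^ p ^ q.natDegree = AdjoinRoot.root q := by
    rw [← hcard]; exact FiniteField.pow_card _
  have h0 : aeval (AdjoinRoot.root q) (X ^ p ^ q.natDegree - X : (ZMod p)[X]) = 0 := by
    simp [hroot]
  have hd := minpoly.dvd (ZMod p) (AdjoinRoot.root q) h0
  rwa [AdjoinRoot.minpoly_root hm.ne_zero, hm.leadingCoeff, inv_one, map_one, mul_one] at hd

lemma fZ_monic : fZ.Monic := by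
  unfold fZ
  monicity!

lemma fZ_natDegree : fZ.natDegree = 8 := by
  unfold fZ
  compute_degree!

lemma F_monic : F.Monic := fZ_monic.map phi

lemma F_natDegree : F.natDegree = 8 := by
  have := fZ_monic.natDegree_map phi
  rw [fZ_natDegree] at this
  exact this

lemma no_small_factor {k : ℕ} {r u v s : ℤ[X]}
    (hch : F ∣ X ^ (23 ^ k) - r.map phi)
    (hbez : u * fZ + v * (r - X) = 1 + 23 * s)
    {d : (ZMod 23)[X]} (hd : Irreducible d) (hdF : d ∣ F)
    (hdx : d ∣ X ^ (23 ^ k) - X) : False := by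
  have h1 : d ∣ (r.map phi - X) := by
    have := dvd_sub hdx (hdF.trans hch)
    simpa using this
  have key : (u.map phi) * F + (v.map phi) * (r.map phi - X) = 1 := by
    have h := congrArg (Polynomial.map phi) hbez
    simpa [Polynomial.map_mul, Polynomial.map_add, Polynomial.map_sub, z23] using h
  have : d ∣ 1 := key ▸ dvd_add (hdF.mul_left _) (h1.mul_left _)
  exact hd.not_isUnit (isUnit_of_dvd_one this)

lemma deg_pos_of_nonunit {g : (ZMod 23)[X]} (h0 : g ≠ 0) (hu : ¬ IsUnit g) :
    0 < g.natDegree := by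
  rcases Nat.eq_zero_or_pos g.natDegree with h | h
  · exfalso
    apply hu
    rw [Polynomial.eq_C_of_natDegree_eq_zero h]
    refine isUnit_C.mpr (isUnit_iff_ne_zero.mpr fun hz => h0 ?_)
    rw [Polynomial.eq_C_of_natDegree_eq_zero h, hz, map_zero]
  · exact h

lemma F_irred : Irreducible F := by
  obtain ⟨hc1, hc2, hc3, hc4⟩ := chain
  constructor
  · intro hu
    have := Polynomial.natDegree_eq_zero_of_isUnit hu
    rw [F_natDegree] at this
    exact absurd this (by norm_num)
  · intro g h hgh
    by_contra hcon
    push_neg at hcon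
    obtain ⟨hg, hh⟩ := hcon
    have hF0 : F ≠ 0 := F_monic.ne_zero
    have hg0 : g ≠ 0 := fun h0 => hF0 (by rw [hgh, h0, zero_mul])
    have hh0 : h ≠ 0 := fun h0 => hF0 (by rw [hgh, h0, mul_zero])
    have hsum : g.natDegree + h.natDegree = 8 := by
      rw [← Polynomial.natDegree_mul hg0 hh0, ← hgh, F_natDegree]
    have hgpos := deg_pos_of_nonunit hg0 hg
    have hhpos := deg_pos_of_nonunit hh0 hh
    -- pick a factor of natDegree between 1 and 4
    obtain ⟨g', hg'0, hg'u, hg'dvd, hg'le⟩ :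
        ∃ g' : (ZMod 23)[X], g' ≠ 0 ∧ ¬ IsUnit g' ∧ g' ∣ F ∧ g'.natDegree ≤ 4 := by
      rcases le_or_gt g.natDegree 4 with hle | hlt
      · exact ⟨g, hg0, hg, ⟨h, hgh⟩, hle⟩
      · exact ⟨h, hh0, hh, ⟨g, by rw [hgh, mul_comm]⟩, by omega⟩
    obtain ⟨d, hdirr, hddvd⟩ := WfDvdMonoid.exists_irreducible_factor hg'u hg'0
    have hdF : d ∣ F := hddvd.trans hg'dvd
    have hd0 : d ≠ 0 := hdirr.ne_zero
    have hdle : d.natDegree ≤ 4 := le_trans (Polynomial.natDegree_le_of_dvd hddvd hg'0) hg'le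
    have hdpos : 0 < d.natDegree := deg_pos_of_nonunit hd0 hdirr.not_isUnit
    -- make monic
    set e : (ZMod 23)[X] := normalize d with he
    have hem : e.Monic := Polynomial.monic_normalize hd0
    have heassoc : Associated d e := associated_normalize d
    have heirr : Irreducible e := heassoc.irreducible hdirr
    have heF : e ∣ F := (heassoc.symm.dvd).trans hdF
    have hedeg : e.natDegree = d.natDegree :=
      Polynomial.natDegree_eq_of_degree_eq Polynomial.degree_normalize
    have hedvdx : e ∣ X ^ 23 ^ e.natDegree - X := irred_dvd_pow heirr hem
    have h1le : 1 ≤ e.natDegree := hedeg ▸ hdpos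
    have h4ge : e.natDegree ≤ 4 := hedeg ▸ hdle
    set k := e.natDegree with hk
    clear_value k
    interval_cases k
    · exact no_small_factor hc1 bz1 heirr heF hedvdx
    · exact no_small_factor hc2 bz2 heirr heF hedvdx
    · exact no_small_factor hc3 bz3 heirr heF hedvdx
    · exact no_small_factor hc4 bz4 heirr heF hedvdx

lemma fZ_irred : Irreducible fZ :=
  Polynomial.Monic.irreducible_of_irreducible_map phi fZ fZ_monic F_irred


theorem fQ_irred : Irreducible (fZ.map (algebraMap ℤ ℚ)) :=
  (Polynomial.Monic.irreducible_iff_irreducible_map_fraction_map fZ_monic).mp fZ_irred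

end S19

theorem stmt_19 :
    Irreducible (∑ j ∈ Finset.range (8 + 1),
      C (((Nat.factorial 8 / Nat.factorial j) * Nat.choose (8 + 11 - j) (8 - j) : ℕ) : ℚ) * X ^ j : ℚ[X]) := by
  have heq :
      (∑ j ∈ Finset.range (8 + 1),
        C (((Nat.factorial 8 / Nat.factorial j) * Nat.choose (8 + 11 - j) (8 - j) : ℕ) : ℚ) * X ^ j : ℚ[X])
      = S19.fZ.map (algebraMap ℤ ℚ) := by
    simp only [Finset.sum_range_succ, Finset.sum_range_zero, zero_add]
    have h0 : (Nat.factorial 8 / Nat.factorial 0) * Nat.choose (8+11-0) (8-0) = 3047466240 := by decide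
    have h1 : (Nat.factorial 8 / Nat.factorial 1) * Nat.choose (8+11-1) (8-1) = 1283143680 := by decide
    have h2 : (Nat.factorial 8 / Nat.factorial 2) * Nat.choose (8+11-2) (8-2) = 249500160 := by decide
    have h3 : (Nat.factorial 8 / Nat.factorial 3) * Nat.choose (8+11-3) (8-3) = 29352960 := by decide
    have h4 : (Nat.factorial 8 / Nat.factorial 4) * Nat.choose (8+11-4) (8-4) = 2293200 := by decide
    have h5 : (Nat.factorial 8 / Nat.factorial 5) * Nat.choose (8+11-5) (8-5) = 122304 := by decide
    have h6 : (Nat.factorial 8 / Nat.factorial 6) * Nat.choose (8+11-6) (8-6) = 4368 := by decide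
    have h7 : (Nat.factorial 8 / Nat.factorial 7) * Nat.choose (8+11-7) (8-7) = 96 := by decide
    have h8 : (Nat.factorial 8 / Nat.factorial 8) * Nat.choose (8+11-8) (8-8) = 1 := by decide
    rw [h0, h1, h2, h3, h4, h5, h6, h7, h8]
    unfold S19.fZ
    simp only [Polynomial.map_add, Polynomial.map_mul, Polynomial.map_pow, Polynomial.map_X,
      Polynomial.map_ofNat, Polynomial.map_one, Nat.cast_ofNat, Nat.cast_one, map_ofNat, map_one]
    ring
  rw [heq]
  exact S19.fQ_irred
end
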